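/- Consider N ≥ 1 heterogeneous flywheel systems with positive parameters I_i, B_{vi}, γ_i for i = 1,...,N. Let ψ_0 : ℝ → ℝ be differentiable, let P_{i,out} : ℝ → ℝ, and suppose for every i and every t the common-trajectory dynamics hold: ψ_0'(t) = -(2 B_{vi}/I_i) ψ_0(t) - (2 γ_i/I_i) P_{i,out}(t), and in addition the total power tracks the reference: Σ_{i=1}^N P_{i,out}(t) = P_REF(t). Then ψ_0 necessarily satisfies ψ_0'(t) = -α_0 ψ_0(t) - β_0 P_REF(t) for all t, where α_0 = (2 Σ_{i=1}^N B_{vi}/γ_i)/(Σ_{i=1}^N I_i/γ_i) and β_0 = 2/(Σ_{i=1}^N I_i/γ_i). -/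

import Mathlib

/-- **Necessity of the common SOE trajectory dynamics.** If a common SOE
trajectory `ψ₀` is followed by every flywheel and the total power output tracks
the reference, then `ψ₀` necessarily obeys `ψ₀' = -α₀ ψ₀ - β₀ P_REF`. -/
theorem fesms_common_soe_trajectory_necessity
    (N : ℕ) (hN : 1 ≤ N) (I B γ : Fin N → ℝ)
    (hI : ∀ i, 0 < I i) (hB : ∀ i, 0 < B i) (hγ : ∀ i, 0 < γ i)
    (α0 β0 : ℝ)
    (hα0 : α0 = (2 * ∑ i, B i / γ i) / (∑ i, I i / γ i))
    (hβ0 : β0 = 2 / (∑ i, I i / γ i))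
    (PREF ψ0 : ℝ → ℝ) (hψ0 : Differentiable ℝ ψ0)
    (Pout : Fin N → ℝ → ℝ)
    (hdyn : ∀ (i : Fin N) (t : ℝ),
      deriv ψ0 t = -(2 * B i / I i) * ψ0 t - (2 * γ i / I i) * Pout i t)
    (htrack : ∀ t : ℝ, (∑ i, Pout i t) = PREF t) :
    ∀ t : ℝ, deriv ψ0 t = -α0 * ψ0 t - β0 * PREF t := by
  intro t
  have hS : 0 < ∑ i, I i / γ i := by
    apply Finset.sum_pos
    · intro i _; exact div_pos (hI i) (hγ i)
    · exact Finset.univ_nonempty_iff.mpr (Fin.pos_iff_nonempty.mp hN)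
  have hP : ∀ i : Fin N, I i / γ i / 2 * deriv ψ0 t + B i / γ i * ψ0 t
      + Pout i t = 0 := by
    intro i
    have h := hdyn i t
    have hIi := (hI i).ne'
    have hγi := (hγ i).ne'
    have h2 : I i * deriv ψ0 t = -(2 * B i) * ψ0 t - 2 * γ i * Pout i t := by
      rw [h]; field_simp
    field_simp
    linear_combination h2
  have hsum : (∑ i, I i / γ i) / 2 * deriv ψ0 t
      + (∑ i, B i / γ i) * ψ0 t + PREF t = 0 := by
    rw [← htrack t, Finset.sum_div, Finset.sum_mul, Finset.sum_mul,
      ← Finset.sum_add_distrib, ← Finset.sum_add_distrib]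
    exact Finset.sum_eq_zero fun i _ => hP i
  rw [hα0, hβ0]
  have hS' := hS.ne'
  field_simp
  linear_combination 2 * hsum
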